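/- Characterization of the values of type ♯𝔹⇒♯𝔹: a unitary distribution of closed abstractions (Σᵢ₌₁ⁿ αᵢ·λx.t⃗ᵢ) ∈ S is a value of type ♯𝔹⇒♯𝔹 (i.e., belongs to ⟦♯𝔹⇒♯𝔹⟧) if and only if it represents a unitary operator F : ℂ² → ℂ². -/

import Mathlib

namespace LinAlg

/-! ### Syntax: pure values, pure terms, term distributions -/

mutual
inductive Val : Type where
  | var : ℕ → Val
  | lam : ℕ → Distr → Val
  | star : Val
  | pair : Val → Val → Val
  | inl : Val → Val
  | inr : Val → Val
inductive Term : Type where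
  | val : Val → Term
  | app : Term → Term → Term
  | seq : Term → Distr → Term
  | letp : ℕ → ℕ → Term → Distr → Term
  | matc : Term → ℕ → Distr → ℕ → Distr → Term
inductive Distr : Type where
  | zero : Distr
  | single : Term → Distr
  | add : Distr → Distr → Distr
  | smul : ℂ → Distr → Distr
end

noncomputable instance : DecidableEq Val := fun _ _ => Classical.dec _
noncomputable instance : DecidableEq Term := fun _ _ => Classical.dec _
noncomputable instance : DecidableEq Distr := fun _ _ => Classical.dec _

/-! ### The shallow congruence ≡ on term distributions -/

inductive Cong : Distr → Distr → Prop where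
  | addZero (d : Distr) : Cong (d.add .zero) d
  | oneSmul (d : Distr) : Cong (Distr.smul 1 d) d
  | smulSmul (a b : ℂ) (d : Distr) : Cong (Distr.smul a (Distr.smul b d)) (Distr.smul (a * b) d)
  | addComm (d₁ d₂ : Distr) : Cong (d₁.add d₂) (d₂.add d₁)
  | addAssoc (d₁ d₂ d₃ : Distr) : Cong ((d₁.add d₂).add d₃) (d₁.add (d₂.add d₃))
  | smulDistrib (a b : ℂ) (d : Distr) : Cong (Distr.smul (a + b) d) ((Distr.smul a d).add (Distr.smul b d))
  | smulAdd (a : ℂ) (d₁ d₂ : Distr) : Cong (Distr.smul a (d₁.add d₂)) ((Distr.smul a d₁).add (Distr.smul a d₂))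
  | refl (d : Distr) : Cong d d
  | symm {d₁ d₂ : Distr} : Cong d₁ d₂ → Cong d₂ d₁
  | trans {d₁ d₂ d₃ : Distr} : Cong d₁ d₂ → Cong d₂ d₃ → Cong d₁ d₃
  | addCongr {d₁ d₁' d₂ d₂' : Distr} : Cong d₁ d₁' → Cong d₂ d₂' → Cong (d₁.add d₂) (d₁'.add d₂')
  | smulCongr (a : ℂ) {d d' : Distr} : Cong d d' → Cong (Distr.smul a d) (Distr.smul a d')

/-! ### Free variables -/

mutual
def fvV : Val → Finset ℕ
  | .var y => {y}
  | .lam y b => fvD b \ {y}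
  | .star => ∅
  | .pair v₁ v₂ => fvV v₁ ∪ fvV v₂
  | .inl v => fvV v
  | .inr v => fvV v
def fvT : Term → Finset ℕ
  | .val v => fvV v
  | .app s t => fvT s ∪ fvT t
  | .seq t s => fvT t ∪ fvD s
  | .letp y z t s => fvT t ∪ (fvD s \ {y, z})
  | .matc t y s₁ z s₂ => fvT t ∪ (fvD s₁ \ {y}) ∪ (fvD s₂ \ {z})
def fvD : Distr → Finset ℕ
  | .zero => ∅
  | .single t => fvT t
  | .add d₁ d₂ => fvD d₁ ∪ fvD d₂
  | .smul _ d => fvD d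
end

/-! ### Pure substitution -/

mutual
def substV (x : ℕ) (w : Val) : Val → Val
  | .var y => if y = x then w else .var y
  | .lam y b => if y = x then .lam y b else .lam y (substD x w b)
  | .star => .star
  | .pair v₁ v₂ => .pair (substV x w v₁) (substV x w v₂)
  | .inl v => .inl (substV x w v)
  | .inr v => .inr (substV x w v)
def substT (x : ℕ) (w : Val) : Term → Term
  | .val v => .val (substV x w v)
  | .app s t => .app (substT x w s) (substT x w t)
  | .seq t s => .seq (substT x w t) (substD x w s)
  | .letp y z t s =>
      .letp y z (substT x w t) (if y = x ∨ z = x then s else substD x w s)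
  | .matc t y s₁ z s₂ =>
      .matc (substT x w t) y (if y = x then s₁ else substD x w s₁)
        z (if z = x then s₂ else substD x w s₂)
def substD (x : ℕ) (w : Val) : Distr → Distr
  | .zero => .zero
  | .single t => .single (substT x w t)
  | .add d₁ d₂ => .add (substD x w d₁) (substD x w d₂)
  | .smul a d => .smul a (substD x w d)
end

/-! ### Linear extensions of the syntactic constructs -/

def appTD (s : Term) : Distr → Distr
  | .zero => .zero
  | .single t => .single (.app s t)
  | .add d₁ d₂ => .add (appTD s d₁) (appTD s d₂)
  | .smul a d => .smul a (appTD s d)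

def appDV : Distr → Val → Distr
  | .zero, _ => .zero
  | .single t, v => .single (.app t (.val v))
  | .add d₁ d₂, v => .add (appDV d₁ v) (appDV d₂ v)
  | .smul a d, v => .smul a (appDV d v)

def seqD : Distr → Distr → Distr
  | .zero, _ => .zero
  | .single t, s => .single (.seq t s)
  | .add d₁ d₂, s => .add (seqD d₁ s) (seqD d₂ s)
  | .smul a d, s => .smul a (seqD d s)

def letpD (x y : ℕ) : Distr → Distr → Distr
  | .zero, _ => .zero
  | .single t, s => .single (.letp x y t s)
  | .add d₁ d₂, s => .add (letpD x y d₁ s) (letpD x y d₂ s)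
  | .smul a d, s => .smul a (letpD x y d s)

def matcD : Distr → ℕ → Distr → ℕ → Distr → Distr
  | .zero, _, _, _, _ => .zero
  | .single t, y, s₁, z, s₂ => .single (.matc t y s₁ z s₂)
  | .add d₁ d₂, y, s₁, z, s₂ => .add (matcD d₁ y s₁ z s₂) (matcD d₂ y s₁ z s₂)
  | .smul a d, y, s₁, z, s₂ => .smul a (matcD d y s₁ z s₂)

/-- Bilinear application of distributions:  (Σᵢ αᵢ·tᵢ)(Σⱼ βⱼ·sⱼ) = Σᵢⱼ αᵢβⱼ·(tᵢ sⱼ). -/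
def appD : Distr → Distr → Distr
  | .zero, _ => .zero
  | .single t, w => appTD t w
  | .add d₁ d₂, w => .add (appD d₁ w) (appD d₂ w)
  | .smul a d, w => .smul a (appD d w)

/-- Bilinear substitution  d⟨x := w⃗⟩ = Σⱼ βⱼ · d[x := wⱼ]  (recursion on the value
distribution w⃗; non-value summands are junk and are sent to 0⃗). -/
def bsubst (x : ℕ) (d : Distr) : Distr → Distr
  | .zero => .zero
  | .single (.val w) => substD x w d
  | .single _ => .zero
  | .add w₁ w₂ => .add (bsubst x d w₁) (bsubst x d w₂)
  | .smul a w => .smul a (bsubst x d w)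

/-! ### Evaluation -/

inductive Atom : Term → Distr → Prop where
  | beta (x : ℕ) (b : Distr) (v : Val) :
      Atom (.app (.val (.lam x b)) (.val v)) (substD x v b)
  | seqStar (s : Distr) : Atom (.seq (.val .star) s) s
  | letPair (x y : ℕ) (v w : Val) (s : Distr) :
      Atom (.letp x y (.val (.pair v w)) s) (substD y w (substD x v s))
  | matchInl (v : Val) (y : ℕ) (s₁ : Distr) (z : ℕ) (s₂ : Distr) :
      Atom (.matc (.val (.inl v)) y s₁ z s₂) (substD y v s₁)
  | matchInr (v : Val) (y : ℕ) (s₁ : Distr) (z : ℕ) (s₂ : Distr) :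
      Atom (.matc (.val (.inr v)) y s₁ z s₂) (substD z v s₂)
  | appR (s : Term) {t : Term} {d : Distr} : Atom t d → Atom (.app s t) (appTD s d)
  | appL (v : Val) {t : Term} {d : Distr} : Atom t d → Atom (.app t (.val v)) (appDV d v)
  | seqC (s : Distr) {t : Term} {d : Distr} : Atom t d → Atom (.seq t s) (seqD d s)
  | letC (x y : ℕ) (s : Distr) {t : Term} {d : Distr} :
      Atom t d → Atom (.letp x y t s) (letpD x y d s)
  | matcC (y : ℕ) (s₁ : Distr) (z : ℕ) (s₂ : Distr) {t : Term} {d : Distr} :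
      Atom t d → Atom (.matc t y s₁ z s₂) (matcD d y s₁ z s₂)

/-- One-step evaluation:  t⃗ ≻ t⃗′. -/
def Step (d d' : Distr) : Prop :=
  ∃ (a : ℂ) (s : Term) (s' r : Distr),
    Cong d (Distr.add (.smul a (.single s)) r) ∧
    Cong d' (Distr.add (.smul a s') r) ∧ Atom s s'

/-- Evaluation  t⃗ ≻≻ t⃗′:  reflexive-transitive closure of one-step evaluation. -/
def Eval : Distr → Distr → Prop := Relation.ReflTransGen Step

/-! ### Value distributions, inner product, norm -/

def IsValT : Term → Prop
  | .val _ => True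
  | _ => False

def IsValD : Distr → Prop
  | .zero => True
  | .single t => IsValT t
  | .add d₁ d₂ => IsValD d₁ ∧ IsValD d₂
  | .smul _ d => IsValD d

/-- The set of closed value distributions. -/
def ClosedValD : Set Distr := {d | IsValD d ∧ fvD d = ∅}

/-- Total coefficient of the pure term `t` in the distribution `d`. -/
noncomputable def coeff : Distr → Term → ℂ
  | .zero, _ => 0
  | .single s, t => if s = t then 1 else 0
  | .add d₁ d₂, t => coeff d₁ t + coeff d₂ t
  | .smul a d, t => a * coeff d t

/-- The domain of a distribution (all pure terms occurring in it, even with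
coefficient 0). -/
noncomputable def domD : Distr → Finset Term
  | .zero => ∅
  | .single t => {t}
  | .add d₁ d₂ => domD d₁ ∪ domD d₂
  | .smul _ d => domD d

/-- The inner product ⟨v⃗|w⃗⟩ on value distributions. -/
noncomputable def innerD (v w : Distr) : ℂ :=
  ∑ t ∈ domD v, (starRingEnd ℂ) (coeff v t) * coeff w t

/-- The pseudo-ℓ²-norm ‖v⃗‖. -/
noncomputable def normD (v : Distr) : ℝ := Real.sqrt (innerD v v).re

/-- The unit sphere S of closed value distributions of norm 1. -/
def Sphere : Set Distr := {d | d ∈ ClosedValD ∧ normD d = 1}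

/-- Span(X): weak linear combinations of elements of X (taken modulo ≡). -/
inductive Span (X : Set Distr) : Distr → Prop where
  | mem {d : Distr} : d ∈ X → Span X d
  | zero : Span X .zero
  | add {d₁ d₂ : Distr} : Span X d₁ → Span X d₂ → Span X (d₁.add d₂)
  | smul (a : ℂ) {d : Distr} : Span X d → Span X (Distr.smul a d)
  | congr {d d' : Distr} : Span X d → Cong d d' → Span X d'

/-! ### Realizability: unitary types -/

/-- t⃗ ⊩ A :  t⃗ evaluates to some vector of ⟦A⟧. -/
def Realizes (A : Set Distr) (t : Distr) : Prop := ∃ v ∈ A, Eval t v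

/-- |A| : the set of (closed) realizers of A. -/
def realizersOf (A : Set Distr) : Set Distr := {t | fvD t = ∅ ∧ Realizes A t}

/-! ### Type constructors -/

def UnitT : Set Distr := {Distr.single (.val .star)}

/-- ♭A : the basis of A. -/
def flatT (X : Set Distr) : Set Distr :=
  {e | ∃ d ∈ X, ∃ v : Val, (Term.val v) ∈ domD d ∧ e = Distr.single (.val v)}

/-- ♯A : the unitary span of A. -/
def sharpT (X : Set Distr) : Set Distr := {d | Span X d ∧ d ∈ Sphere}

/-- Linear extension of a value constructor. -/
def mapVD (f : Val → Val) : Distr → Distr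
  | .zero => .zero
  | .single (.val v) => .single (.val (f v))
  | .single t => .single t
  | .add d₁ d₂ => .add (mapVD f d₁) (mapVD f d₂)
  | .smul a d => .smul a (mapVD f d)

def inlD : Distr → Distr := mapVD Val.inl
def inrD : Distr → Distr := mapVD Val.inr

/-- Bilinear extension of pairing. -/
def pairD : Distr → Distr → Distr
  | .zero, _ => .zero
  | .single (.val v), w => mapVD (Val.pair v) w
  | .single t, _ => .single t
  | .add d₁ d₂, w => .add (pairD d₁ w) (pairD d₂ w)
  | .smul a d, w => .smul a (pairD d w)

/-- A + B (simple sum). -/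
def plusT (A B : Set Distr) : Set Distr :=
  {d | (∃ v ∈ A, d = inlD v) ∨ (∃ w ∈ B, d = inrD w)}

/-- A × B (simple product). -/
def timesT (A B : Set Distr) : Set Distr :=
  {d | ∃ v ∈ A, ∃ w ∈ B, d = pairD v w}

/-- A → B (pure arrow). -/
def arrowT (A B : Set Distr) : Set Distr :=
  {d | ∃ (x : ℕ) (b : Distr), d = Distr.single (.val (.lam x b)) ∧ fvD d = ∅ ∧
      ∀ v ∈ A, Realizes B (bsubst x b v)}

/-- Σᵢ αᵢ · λx.t⃗ᵢ  ↦  Σᵢ αᵢ · t⃗ᵢ  (strips the λx in front of each summand). -/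
def stripLam (x : ℕ) : Distr → Distr
  | .zero => .zero
  | .single (.val (.lam y b)) => if y = x then b else .single (.val (.lam y b))
  | .single t => .single t
  | .add d₁ d₂ => .add (stripLam x d₁) (stripLam x d₂)
  | .smul a d => .smul a (stripLam x d)

/-- A ⇒ B (unitary arrow). -/
def uarrowT (A B : Set Distr) : Set Distr :=
  {d | d ∈ Sphere ∧ ∃ x : ℕ,
      (∀ t ∈ domD d, ∃ b : Distr, t = Term.val (.lam x b)) ∧
      ∀ v ∈ A, Realizes B (bsubst x (stripLam x d) v)}

/-! ### Booleans -/

def ttD : Distr := .single (.val (.inl .star))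
def ffD : Distr := .single (.val (.inr .star))

/-- 𝔹 = 𝕌 + 𝕌. -/
def BoolT : Set Distr := plusT UnitT UnitT

/-- ♯𝔹, the type of unitary Booleans. -/
def sharpBool : Set Distr := sharpT BoolT

/-- Boolean projection π : Span({tt,ff}) → ℂ². -/
noncomputable def piB (d : Distr) : ℂ × ℂ :=
  (coeff d (.val (.inl .star)), coeff d (.val (.inr .star)))

/-- t⃗ represents the operator F : ℂ² → ℂ². -/
def Represents (td : Distr) (F : ℂ × ℂ → ℂ × ℂ) : Prop :=
  ∀ v, Span BoolT v → ∃ w, Span BoolT w ∧ Eval (appD td v) w ∧ piB w = F (piB v)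

/-- Hermitian inner product on ℂ². -/
def hinner (u v : ℂ × ℂ) : ℂ :=
  (starRingEnd ℂ) u.1 * v.1 + (starRingEnd ℂ) u.2 * v.2

/-- A unitary operator on ℂ². -/
def IsUnitaryOp (F : ℂ × ℂ → ℂ × ℂ) : Prop :=
  ∀ u v : ℂ × ℂ, hinner (F u) (F v) = hinner u v

/-! ### Typing contexts, substitutions, judgments -/

abbrev Ctx := List (ℕ × Set Distr)
abbrev Subst := List (ℕ × Distr)

/-- Applying a substitution, one bilinear substitution at a time. -/
def applySub : Distr → Subst → Distr
  | d, [] => d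
  | d, (x, w) :: σ => applySub (bsubst x d w) σ

/-- σ ∈ ⟦Γ⟧. -/
def SubMem (σ : Subst) (Γ : Ctx) : Prop :=
  List.Forall₂ (fun p q => p.1 = q.1 ∧ p.2 ∈ q.2) σ Γ

def ctxDom (Γ : Ctx) : Set ℕ := {x | ∃ A, (x, A) ∈ Γ}

/-- dom♯(Γ): the variables of Γ whose type is not a pure-value type. -/
def ctxDomSharp (Γ : Ctx) : Set ℕ := {x | ∃ A, (x, A) ∈ Γ ∧ flatT A ≠ A}

/-- All the types of the context are unitary types (subsets of the sphere). -/
def CtxUnitary (Γ : Ctx) : Prop := ∀ p ∈ Γ, p.2 ⊆ Sphere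

/-- Validity of the typing judgment  Γ ⊢ t⃗ : A. -/
def ValidJ (Γ : Ctx) (t : Distr) (A : Set Distr) : Prop :=
  ctxDomSharp Γ ⊆ (fvD t : Set ℕ) ∧ (fvD t : Set ℕ) ⊆ ctxDom Γ ∧
  ∀ σ : Subst, SubMem σ Γ → Realizes A (applySub t σ)

/-- Validity of the orthogonality judgment  Γ | Δ₁ ⊢ t⃗₁ ⊥ Δ₂ ⊢ t⃗₂ : A. -/
def OrthoJ (Γ Δ₁ Δ₂ : Ctx) (t₁ t₂ : Distr) (A : Set Distr) : Prop :=
  ValidJ (Γ ++ Δ₁) t₁ A ∧ ValidJ (Γ ++ Δ₂) t₂ A ∧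
  ∀ σ σ₁ σ₂ : Subst, SubMem σ Γ → SubMem σ₁ Δ₁ → SubMem σ₂ Δ₂ →
    ∀ v₁ v₂ : Distr, v₁ ∈ ClosedValD → v₂ ∈ ClosedValD →
      Eval (applySub t₁ (σ ++ σ₁)) v₁ → Eval (applySub t₂ (σ ++ σ₂)) v₂ →
      innerD v₁ v₂ = 0

end LinAlg

namespace LinAlg

/-! ### Section A: basic facts about `Cong`, `coeff`, `domD` -/

attribute [local instance] Classical.propDecidable

@[elab_as_elim]
theorem Distr.ind {P : Distr → Prop} (hz : P .zero) (hs : ∀ t, P (.single t))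
    (ha : ∀ d₁ d₂, P d₁ → P d₂ → P (d₁.add d₂)) (hm : ∀ (a:ℂ) d, P d → P (.smul a d)) :
    ∀ d, P d := by
  apply Distr.rec (motive_1 := fun _ => True) (motive_2 := fun _ => True) (motive_3 := P)
    <;> intros <;> try trivial
  · exact hs _
  · exact ha _ _ ‹_› ‹_›
  · exact hm _ _ ‹_›

namespace Cong

theorem add_zero' (d : Distr) : Cong (d.add .zero) d := Cong.addZero d
theorem zero_add (d : Distr) : Cong (Distr.add .zero d) d :=
  (Cong.addComm _ _).trans (Cong.addZero d)
theorem smul_zero (a : ℂ) : Cong (Distr.smul a .zero) .zero := by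
  have h0 : Cong (Distr.zero) (Distr.smul 0 .zero) := by
    have h1 : Cong (Distr.zero) (Distr.smul 1 .zero) := (Cong.oneSmul _).symm
    have h2 : Cong (Distr.smul 1 Distr.zero) (Distr.smul (1 + 0) Distr.zero) := by
      norm_num
      exact Cong.refl _
    have h3 : Cong (Distr.smul ((1:ℂ) + 0) Distr.zero)
        ((Distr.smul 1 Distr.zero).add (Distr.smul 0 Distr.zero)) := Cong.smulDistrib _ _ _
    have h4 : Cong ((Distr.smul 1 Distr.zero).add (Distr.smul 0 Distr.zero))
        (Distr.zero.add (Distr.smul 0 Distr.zero)) :=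
      Cong.addCongr (Cong.oneSmul _) (Cong.refl _)
    exact (((h1.trans h2).trans h3).trans h4).trans (zero_add _)
  have : Cong (Distr.smul a Distr.zero) (Distr.smul a (Distr.smul 0 .zero)) :=
    Cong.smulCongr a h0
  have h5 : Cong (Distr.smul a (Distr.smul 0 Distr.zero)) (Distr.smul (a*0) Distr.zero) :=
    Cong.smulSmul _ _ _
  have h6 : Cong (Distr.smul (a*0) Distr.zero) (Distr.smul 0 Distr.zero) := by
    rw [mul_zero]; exact Cong.refl _
  exact ((this.trans h5).trans h6).trans h0.symm

/-- X + (Y + Z) ≡ Y + (X + Z) -/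
theorem add_left_comm (X Y Z : Distr) :
    Cong (X.add (Y.add Z)) (Y.add (X.add Z)) :=
  ((Cong.addAssoc X Y Z).symm.trans
    (Cong.addCongr (Cong.addComm X Y) (Cong.refl Z))).trans (Cong.addAssoc Y X Z)

end Cong

theorem cong_of_eq {d d' : Distr} (h : d = d') : Cong d d' := h ▸ Cong.refl d

theorem coeff_eq_zero_of_not_mem {d : Distr} {t : Term} (h : t ∉ domD d) : coeff d t = 0 := by
  induction d using Distr.ind with
  | hz => rfl
  | hs s =>
      simp only [domD, Finset.mem_singleton] at h
      simp [coeff, Ne.symm h]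
  | ha d₁ d₂ ih₁ ih₂ =>
      simp only [domD, Finset.mem_union, not_or] at h
      simp [coeff, ih₁ h.1, ih₂ h.2]
  | hm a d ih =>
      simp only [domD] at h
      simp [coeff, ih h]

theorem mem_domD_of_coeff_ne_zero {d : Distr} {t : Term} (h : coeff d t ≠ 0) : t ∈ domD d := by
  by_contra hc; exact h (coeff_eq_zero_of_not_mem hc)

theorem Cong.coeff_eq {d d' : Distr} (h : Cong d d') : ∀ t, coeff d t = coeff d' t := by
  induction h with
  | addZero d => intro t; simp [coeff]
  | oneSmul d => intro t; simp [coeff]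
  | smulSmul a b d => intro t; simp [coeff]; ring
  | addComm d₁ d₂ => intro t; simp [coeff]; ring
  | addAssoc d₁ d₂ d₃ => intro t; simp [coeff]; ring
  | smulDistrib a b d => intro t; simp [coeff]; ring
  | smulAdd a d₁ d₂ => intro t; simp [coeff]; ring
  | refl d => intro t; rfl
  | symm h ih => intro t; exact (ih t).symm
  | trans h₁ h₂ ih₁ ih₂ => intro t; exact (ih₁ t).trans (ih₂ t)
  | addCongr h₁ h₂ ih₁ ih₂ => intro t; simp [coeff, ih₁ t, ih₂ t]
  | smulCongr a h ih => intro t; simp [coeff, ih t]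

theorem Cong.domD_eq {d d' : Distr} (h : Cong d d') : domD d = domD d' := by
  induction h with
  | addZero d => simp [domD]
  | oneSmul d => simp [domD]
  | smulSmul a b d => simp [domD]
  | addComm d₁ d₂ => simp [domD, Finset.union_comm]
  | addAssoc d₁ d₂ d₃ => simp [domD, Finset.union_assoc]
  | smulDistrib a b d => simp [domD]
  | smulAdd a d₁ d₂ => simp [domD]
  | refl d => rfl
  | symm h ih => exact ih.symm
  | trans h₁ h₂ ih₁ ih₂ => exact ih₁.trans ih₂
  | addCongr h₁ h₂ ih₁ ih₂ => simp [domD, ih₁, ih₂]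
  | smulCongr a h ih => simp [domD, ih]

theorem Cong.isValD_iff {d d' : Distr} (h : Cong d d') : IsValD d ↔ IsValD d' := by
  induction h with
  | addZero d => simp [IsValD]
  | oneSmul d => simp [IsValD]
  | smulSmul a b d => simp [IsValD]
  | addComm d₁ d₂ => simp [IsValD]; tauto
  | addAssoc d₁ d₂ d₃ => simp [IsValD]; tauto
  | smulDistrib a b d => simp [IsValD]
  | smulAdd a d₁ d₂ => simp [IsValD]
  | refl d => rfl
  | symm h ih => exact ih.symm
  | trans h₁ h₂ ih₁ ih₂ => exact ih₁.trans ih₂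
  | addCongr h₁ h₂ ih₁ ih₂ => simp [IsValD, ih₁, ih₂]
  | smulCongr a h ih => simp [IsValD, ih]

theorem Cong.fvD_eq {d d' : Distr} (h : Cong d d') : fvD d = fvD d' := by
  induction h with
  | addZero d => simp [fvD]
  | oneSmul d => simp [fvD]
  | smulSmul a b d => simp [fvD]
  | addComm d₁ d₂ => simp [fvD, Finset.union_comm]
  | addAssoc d₁ d₂ d₃ => simp [fvD, Finset.union_assoc]
  | smulDistrib a b d => simp [fvD]
  | smulAdd a d₁ d₂ => simp [fvD]
  | refl d => rfl
  | symm h ih => exact ih.symm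
  | trans h₁ h₂ ih₁ ih₂ => exact ih₁.trans ih₂
  | addCongr h₁ h₂ ih₁ ih₂ => simp [fvD, ih₁, ih₂]
  | smulCongr a h ih => simp [fvD, ih]

theorem Cong.innerD_self_eq {d d' : Distr} (h : Cong d d') : innerD d d = innerD d' d' := by
  unfold innerD
  rw [h.domD_eq]
  exact Finset.sum_congr rfl (fun t _ => by rw [h.coeff_eq t])

theorem Cong.normD_eq {d d' : Distr} (h : Cong d d') : normD d = normD d' := by
  unfold normD; rw [h.innerD_self_eq]
/-! ### Section B: characterization of `Cong` by `domD` and `coeff` -/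

/-- Unlinearize a list of weighted terms. -/
noncomputable def unl : List (ℂ × Term) → Distr
  | [] => .zero
  | p :: P => .add (.smul p.1 (.single p.2)) (unl P)

noncomputable def total (P : List (ℂ × Term)) (t : Term) : ℂ :=
  (P.map (fun p => if p.2 = t then p.1 else 0)).sum

noncomputable def keysD (P : List (ℂ × Term)) : List Term := P.map Prod.snd

noncomputable def lin : Distr → List (ℂ × Term)
  | .zero => []
  | .single t => [(1, t)]
  | .add d₁ d₂ => lin d₁ ++ lin d₂
  | .smul a d => (lin d).map (fun p => (a * p.1, p.2))

theorem total_nil (t : Term) : total [] t = 0 := rfl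
theorem total_cons (p : ℂ × Term) (P : List (ℂ × Term)) (t : Term) :
    total (p :: P) t = (if p.2 = t then p.1 else 0) + total P t := by
  simp [total]

theorem total_eq_zero_of_not_mem {P : List (ℂ × Term)} {t : Term} (h : t ∉ keysD P) :
    total P t = 0 := by
  induction P with
  | nil => rfl
  | cons p P ih =>
      simp only [keysD, List.map_cons, List.mem_cons, not_or] at h
      rw [total_cons, ih (by simp [keysD, h.2]), if_neg (fun hc => h.1 hc.symm), add_zero]

theorem unl_append (P Q : List (ℂ × Term)) :
    Cong (unl (P ++ Q)) ((unl P).add (unl Q)) := by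
  induction P with
  | nil => exact (Cong.zero_add (unl Q)).symm
  | cons p P ih =>
      simpa [unl] using (Cong.addCongr (Cong.refl _) ih).trans (Cong.addAssoc _ _ _).symm

theorem unl_map_smul (a : ℂ) (P : List (ℂ × Term)) :
    Cong (unl (P.map (fun p => (a * p.1, p.2)))) (.smul a (unl P)) := by
  induction P with
  | nil => exact (Cong.smul_zero a).symm
  | cons p P ih =>
      simp only [List.map_cons, unl]
      exact ((Cong.addCongr (Cong.smulSmul a p.1 (.single p.2)).symm ih).trans
        (Cong.smulAdd a _ _).symm)

theorem cong_unl_lin (d : Distr) : Cong d (unl (lin d)) := by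
  induction d using Distr.ind with
  | hz => exact Cong.refl _
  | hs t =>
      show Cong (Distr.single t) (Distr.add (.smul 1 (.single t)) (unl []))
      exact ((Cong.addZero _).trans (Cong.oneSmul _)).symm
  | ha d₁ d₂ ih₁ ih₂ =>
      exact (Cong.addCongr ih₁ ih₂).trans (unl_append _ _).symm
  | hm a d ih =>
      exact (Cong.smulCongr a ih).trans (unl_map_smul a (lin d)).symm

theorem total_map_smul (a : ℂ) (P : List (ℂ × Term)) (t : Term) :
    total (P.map (fun p => (a * p.1, p.2))) t = a * total P t := by
  induction P with
  | nil => simp [total_nil]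
  | cons p P ih =>
      rw [List.map_cons, total_cons, total_cons, ih]
      by_cases h : p.2 = t <;> simp [h] <;> ring

theorem total_lin (d : Distr) (t : Term) : total (lin d) t = coeff d t := by
  induction d using Distr.ind with
  | hz => rfl
  | hs s => simp [lin, total, coeff]
  | ha d₁ d₂ ih₁ ih₂ => simp [lin, total, coeff, ← ih₁, ← ih₂]
  | hm a d ih => simp [lin, coeff, total_map_smul, ih]

theorem keysD_lin (d : Distr) : (keysD (lin d)).toFinset = domD d := by
  induction d using Distr.ind with
  | hz => rfl
  | hs s => simp [lin, keysD, domD]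
  | ha d₁ d₂ ih₁ ih₂ => simp [lin, keysD, domD, ← ih₁, ← ih₂]
  | hm a d ih => simpa [lin, keysD, domD, List.map_map, Function.comp_def] using ih

noncomputable def removeKey (t : Term) : List (ℂ × Term) → List (ℂ × Term)
  | [] => []
  | p :: P => if p.2 = t then removeKey t P else p :: removeKey t P

theorem length_removeKey_le (t : Term) (P : List (ℂ × Term)) :
    (removeKey t P).length ≤ P.length := by
  induction P with
  | nil => simp [removeKey]
  | cons p P ih =>
      by_cases h : p.2 = t <;> simp [removeKey, h] <;> omega

theorem removeKey_of_not_mem {t : Term} {P : List (ℂ × Term)} (h : t ∉ keysD P) :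
    removeKey t P = P := by
  induction P with
  | nil => rfl
  | cons p P ih =>
      simp only [keysD, List.map_cons, List.mem_cons, not_or] at h
      rw [removeKey, if_neg (fun hc => h.1 hc.symm), ih (by simp [keysD, h.2])]

theorem total_removeKey (t : Term) (P : List (ℂ × Term)) (s : Term) :
    total (removeKey t P) s = if s = t then 0 else total P s := by
  induction P with
  | nil => simp [removeKey, total_nil]
  | cons p P ih =>
      by_cases h : p.2 = t
      · rw [removeKey, if_pos h, ih]
        by_cases hs : s = t
        · simp [hs]
        · have hps : ¬ p.2 = s := by rw [h]; exact fun hc => hs hc.symm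
          simp [hs, total_cons, hps]
      · rw [removeKey, if_neg h, total_cons, ih]
        by_cases hs : s = t
        · have hps : ¬ p.2 = s := fun hc => h (by rw [hc, hs])
          simp [hs, total_cons, hps, h]
        · simp [hs, total_cons]

theorem keysD_removeKey (t : Term) (P : List (ℂ × Term)) :
    (keysD (removeKey t P)).toFinset = (keysD P).toFinset.erase t := by
  induction P with
  | nil => simp [removeKey, keysD]
  | cons p P ih =>
      by_cases h : p.2 = t
      · rw [removeKey, if_pos h, ih]
        simp only [keysD, List.map_cons, List.toFinset_cons, h]
        rw [Finset.erase_insert_eq_erase]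
      · rw [removeKey, if_neg h]
        simp only [keysD, List.map_cons, List.toFinset_cons] at ih ⊢
        rw [ih, Finset.erase_insert_of_ne h]

theorem extract_key {t : Term} : ∀ {P : List (ℂ × Term)}, t ∈ keysD P →
    Cong (unl P) (.add (.smul (total P t) (.single t)) (unl (removeKey t P))) := by
  intro P
  induction P with
  | nil => intro h; simp [keysD] at h
  | cons p P ih =>
      intro h
      by_cases hp : p.2 = t
      · rw [removeKey, if_pos hp]
        by_cases hP : t ∈ keysD P
        · have step1 : Cong (unl (p :: P))
              (.add (.smul p.1 (.single t)) (.add (.smul (total P t) (.single t)) (unl (removeKey t P)))) := by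
            rw [show unl (p :: P) = .add (.smul p.1 (.single p.2)) (unl P) from rfl, hp]
            exact Cong.addCongr (Cong.refl _) (ih hP)
          have step2 : Cong _ _ := (Cong.addAssoc (Distr.smul p.1 (.single t))
              (.smul (total P t) (.single t)) (unl (removeKey t P))).symm
          have step3 : Cong ((Distr.smul p.1 (.single t)).add (.smul (total P t) (.single t)))
              (.smul (p.1 + total P t) (.single t)) := (Cong.smulDistrib _ _ _).symm
          have : total (p :: P) t = p.1 + total P t := by rw [total_cons, if_pos hp]
          rw [this]
          exact (step1.trans step2).trans (Cong.addCongr step3 (Cong.refl _))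
        · have h1 : total (p :: P) t = p.1 := by
            rw [total_cons, if_pos hp, total_eq_zero_of_not_mem hP, add_zero]
          rw [h1, removeKey_of_not_mem hP]
          show Cong (Distr.add (.smul p.1 (.single p.2)) (unl P)) _
          rw [hp]
          exact Cong.refl _
      · have hP : t ∈ keysD P := by
          simp only [keysD, List.map_cons, List.mem_cons] at h
          rcases h with h | h
          · exact absurd h.symm hp
          · exact h
        rw [removeKey, if_neg hp]
        have h1 : total (p :: P) t = total P t := by
          rw [total_cons, if_neg hp, zero_add]
        rw [h1]
        show Cong (Distr.add (.smul p.1 (.single p.2)) (unl P)) _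
        exact (Cong.addCongr (Cong.refl _) (ih hP)).trans
          (Cong.add_left_comm _ _ _)

theorem unl_master : ∀ (n : ℕ) (P Q : List (ℂ × Term)), P.length ≤ n →
    (keysD P).toFinset = (keysD Q).toFinset → (∀ t, total P t = total Q t) →
    Cong (unl P) (unl Q) := by
  intro n
  induction n with
  | zero =>
      intro P Q hlen hdom htot
      have hP : P = [] := List.length_eq_zero_iff.mp (Nat.le_zero.mp hlen)
      subst hP
      have : Q = [] := by
        cases Q with
        | nil => rfl
        | cons q Q =>
            exfalso
            have : q.2 ∈ (keysD (q :: Q)).toFinset := by simp [keysD]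
            rw [← hdom] at this
            simp [keysD] at this
      subst this; exact Cong.refl _
  | succ n ih =>
      intro P Q hlen hdom htot
      cases P with
      | nil =>
          have : Q = [] := by
            cases Q with
            | nil => rfl
            | cons q Q =>
                exfalso
                have : q.2 ∈ (keysD (q :: Q)).toFinset := by simp [keysD]
                rw [← hdom] at this
                simp [keysD] at this
          subst this; exact Cong.refl _
      | cons p P' =>
          set t := p.2 with ht
          have htP : t ∈ keysD (p :: P') := by simp [keysD]; exact Or.inl ht
          have htQ : t ∈ keysD Q := by
            have : t ∈ (keysD (p :: P')).toFinset := by simpa using htP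
            rw [hdom] at this; simpa using this
          have e1 := extract_key htP
          have e2 := extract_key (P := Q) htQ
          have hrec : Cong (unl (removeKey t (p :: P'))) (unl (removeKey t Q)) := by
            apply ih
            · calc (removeKey t (p :: P')).length = (removeKey t P').length := by
                    rw [removeKey, if_pos rfl]
                _ ≤ P'.length := length_removeKey_le _ _
                _ ≤ n := by simpa using hlen
            · rw [keysD_removeKey, keysD_removeKey, hdom]
            · intro s
              rw [total_removeKey, total_removeKey, htot s]
          have hts : total (p :: P') t = total Q t := htot t
          rw [hts] at e1
          exact (e1.trans (Cong.addCongr (Cong.refl _) hrec)).trans e2.symm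

theorem cong_of (d d' : Distr) (hdom : domD d = domD d') (hc : ∀ t, coeff d t = coeff d' t) :
    Cong d d' := by
  have h := unl_master (lin d).length (lin d) (lin d') le_rfl
    (by rw [keysD_lin, keysD_lin, hdom])
    (fun t => by rw [total_lin, total_lin, hc t])
  exact ((cong_unl_lin d).trans h).trans (cong_unl_lin d').symm

theorem cong_iff (d d' : Distr) :
    Cong d d' ↔ domD d = domD d' ∧ ∀ t, coeff d t = coeff d' t :=
  ⟨fun h => ⟨h.domD_eq, h.coeff_eq⟩, fun h => cong_of d d' h.1 h.2⟩

/-- A distribution with prescribed domain and coefficients. -/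
noncomputable def ofFun (S : Finset Term) (f : Term → ℂ) : Distr :=
  unl (S.toList.map (fun t => (f t, t)))

theorem coeff_unl (P : List (ℂ × Term)) (t : Term) : coeff (unl P) t = total P t := by
  induction P with
  | nil => rfl
  | cons p P ih => simp [unl, coeff, total_cons, ih]

theorem domD_unl (P : List (ℂ × Term)) : domD (unl P) = (keysD P).toFinset := by
  induction P with
  | nil => rfl
  | cons p P ih => simp [unl, domD, keysD, ih]

theorem keysD_map_diag (f : Term → ℂ) (L : List Term) :
    keysD (L.map fun t => (f t, t)) = L := by
  simp [keysD, List.map_map, Function.comp_def]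

theorem domD_ofFun (S : Finset Term) (f : Term → ℂ) : domD (ofFun S f) = S := by
  rw [ofFun, domD_unl, keysD_map_diag, Finset.toList_toFinset]

theorem total_map_diag (f : Term → ℂ) {L : List Term} (hnd : L.Nodup) (t : Term) :
    total (L.map fun t => (f t, t)) t = if t ∈ L then f t else 0 := by
  induction L with
  | nil => simp [total_nil]
  | cons a L ih =>
      rw [List.map_cons, total_cons]
      simp only [List.nodup_cons] at hnd
      by_cases h : a = t
      · subst h
        rw [if_pos rfl, total_eq_zero_of_not_mem (by
            rw [keysD_map_diag]; exact hnd.1), add_zero, if_pos (by simp)]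
      · rw [if_neg h, zero_add, ih hnd.2]
        by_cases ht : t ∈ L
        · rw [if_pos ht, if_pos (by simp [ht])]
        · rw [if_neg ht, if_neg (by simp [ht, Ne.symm h])]

theorem coeff_ofFun (S : Finset Term) (f : Term → ℂ) (t : Term) :
    coeff (ofFun S f) t = if t ∈ S then f t else 0 := by
  rw [ofFun, coeff_unl, total_map_diag f S.nodup_toList]
  simp [Finset.mem_toList]
/-! ### Section C: atomic determinism, normal forms, diamond, confluence -/

theorem atom_not_val {v : Val} {d : Distr} : ¬ Atom (Term.val v) d := fun h => nomatch h

theorem atom_not_isValT {s : Term} {ρ : Distr} (h : Atom s ρ) : ¬ IsValT s := by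
  cases h <;> simp [IsValT]

theorem atom_det {s : Term} {ρ₁ ρ₂ : Distr} (h1 : Atom s ρ₁) (h2 : Atom s ρ₂) : ρ₁ = ρ₂ := by
  induction h1 generalizing ρ₂ with
  | beta x b v =>
      cases h2 with
      | beta => rfl
      | appR _ h => exact absurd h atom_not_val
      | appL _ h => exact absurd h atom_not_val
  | seqStar s =>
      cases h2 with
      | seqStar => rfl
      | seqC _ h => exact absurd h atom_not_val
  | letPair x y v w s =>
      cases h2 with
      | letPair => rfl
      | letC _ _ _ h => exact absurd h atom_not_val
  | matchInl v y s₁ z s₂ =>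
      cases h2 with
      | matchInl => rfl
      | matcC _ _ _ _ h => exact absurd h atom_not_val
  | matchInr v y s₁ z s₂ =>
      cases h2 with
      | matchInr => rfl
      | matcC _ _ _ _ h => exact absurd h atom_not_val
  | appR s h ih =>
      cases h2 with
      | beta => exact absurd h atom_not_val
      | appR _ h' => rw [ih h']
      | appL _ h' => exact absurd h atom_not_val
  | appL v h ih =>
      cases h2 with
      | beta => exact absurd h atom_not_val
      | appR _ h' => exact absurd h' atom_not_val
      | appL _ h' => rw [ih h']
  | seqC s h ih =>
      cases h2 with
      | seqStar => exact absurd h atom_not_val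
      | seqC _ h' => rw [ih h']
  | letC x y s h ih =>
      cases h2 with
      | letPair => exact absurd h atom_not_val
      | letC _ _ _ h' => rw [ih h']
  | matcC y s₁ z s₂ h ih =>
      cases h2 with
      | matchInl => exact absurd h atom_not_val
      | matchInr => exact absurd h atom_not_val
      | matcC _ _ _ _ h' => rw [ih h']

theorem isValT_mem_domD {d : Distr} (h : IsValD d) {t : Term} (ht : t ∈ domD d) : IsValT t := by
  induction d using Distr.ind with
  | hz => simp [domD] at ht
  | hs s =>
      simp only [domD, Finset.mem_singleton] at ht
      exact ht ▸ h
  | ha d₁ d₂ ih₁ ih₂ =>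
      obtain ⟨h₁, h₂⟩ := h
      simp only [domD, Finset.mem_union] at ht
      rcases ht with ht | ht
      · exact ih₁ h₁ ht
      · exact ih₂ h₂ ht
  | hm a d ih => exact ih h ht

theorem Step.of_cong_left {d d' e : Distr} (h : Cong d d') (hs : Step d' e) : Step d e := by
  obtain ⟨a, s, ρ, r, h1, h2, hA⟩ := hs
  exact ⟨a, s, ρ, r, h.trans h1, h2, hA⟩

theorem Step.cong_right {d e e' : Distr} (hs : Step d e) (h : Cong e e') : Step d e' := by
  obtain ⟨a, s, ρ, r, h1, h2, hA⟩ := hs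
  exact ⟨a, s, ρ, r, h1, h.symm.trans h2, hA⟩

/-- Characterization of one-step evaluation via coefficients and domains. -/
theorem step_iff {d d' : Distr} : Step d d' ↔ ∃ (s : Term) (ρ : Distr) (a : ℂ) (X : Finset Term),
    Atom s ρ ∧ s ∈ domD d ∧ X ⊆ domD d ∧ (∀ t ∈ domD d, t ≠ s → t ∈ X) ∧
    (coeff d s - a ≠ 0 → s ∈ X) ∧ domD d' = domD ρ ∪ X ∧
    (∀ t, coeff d' t = coeff d t - (if t = s then a else 0) + a * coeff ρ t) := by
  constructor
  · rintro ⟨a, s, ρ, r, h1, h2, hA⟩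
    have hdom1 : domD d = {s} ∪ domD r := by simpa [domD] using h1.domD_eq
    have hco1 : ∀ t, coeff d t = a * (if s = t then 1 else 0) + coeff r t := by
      intro t; simpa [coeff] using h1.coeff_eq t
    have hdom2 : domD d' = domD ρ ∪ domD r := by simpa [domD] using h2.domD_eq
    have hco2 : ∀ t, coeff d' t = a * coeff ρ t + coeff r t := by
      intro t; simpa [coeff] using h2.coeff_eq t
    refine ⟨s, ρ, a, domD r, hA, ?_, ?_, ?_, ?_, hdom2, ?_⟩
    · rw [hdom1]; simp
    · rw [hdom1]; exact Finset.subset_union_right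
    · intro t ht hts
      rw [hdom1] at ht
      simp only [Finset.mem_union, Finset.mem_singleton] at ht
      tauto
    · intro hne
      apply mem_domD_of_coeff_ne_zero
      have := hco1 s
      rw [if_pos rfl, mul_one] at this
      intro hz
      rw [hz, add_zero] at this
      exact hne (by rw [this, sub_self])
    · intro t
      rw [hco2 t, hco1 t]
      by_cases hts : t = s
      · subst hts; rw [if_pos rfl, if_pos rfl]; ring
      · rw [if_neg (fun h => hts h.symm), if_neg hts]; ring
  · rintro ⟨s, ρ, a, X, hA, hsd, hX1, hX2, hsupp, hdom, hco⟩
    set r : Distr := ofFun X (fun t => coeff d t - if t = s then a else 0) with hr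
    have hcor : ∀ t, coeff r t = coeff d t - (if t = s then a else 0) := by
      intro t
      rw [hr, coeff_ofFun]
      by_cases htX : t ∈ X
      · rw [if_pos htX]
      · rw [if_neg htX]
        by_cases hts : t = s
        · subst hts
          rw [if_pos rfl]
          by_cases hz : coeff d t - a = 0
          · exact hz.symm
          · exact absurd (hsupp hz) htX
        · rw [if_neg hts, coeff_eq_zero_of_not_mem (fun h => htX (hX2 t h hts)), sub_zero]
    have hdomr : domD r = X := domD_ofFun _ _
    refine ⟨a, s, ρ, r, ?_, ?_, hA⟩
    · apply cong_of
      · simp only [domD, hdomr]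
        ext t
        simp only [Finset.mem_union, Finset.mem_singleton]
        constructor
        · intro h
          by_cases hts : t = s
          · exact Or.inl hts
          · exact Or.inr (hX2 t h hts)
        · rintro (h | h)
          · exact h ▸ hsd
          · exact hX1 h
      · intro t
        simp only [coeff, hcor t]
        by_cases hts : t = s
        · subst hts; rw [if_pos rfl, if_pos rfl]; ring
        · rw [if_neg (fun h => hts h.symm), if_neg hts]; ring
    · apply cong_of
      · simp only [domD, hdomr, hdom]
      · intro t
        simp only [coeff, hcor t, hco t]
        ring

theorem step_intro {d : Distr} (s : Term) (ρ : Distr) (a : ℂ) (X : Finset Term)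
    (hA : Atom s ρ) (hsd : s ∈ domD d) (hX1 : X ⊆ domD d)
    (hX2 : ∀ t ∈ domD d, t ≠ s → t ∈ X)
    (hsupp : coeff d s - a ≠ 0 → s ∈ X) {d' : Distr}
    (hdom : domD d' = domD ρ ∪ X)
    (hco : ∀ t, coeff d' t = coeff d t - (if t = s then a else 0) + a * coeff ρ t) :
    Step d d' :=
  step_iff.mpr ⟨s, ρ, a, X, hA, hsd, hX1, hX2, hsupp, hdom, hco⟩

theorem val_no_step {d e : Distr} (h : IsValD d) : ¬ Step d e := by
  intro hs
  obtain ⟨s, ρ, a, X, hA, hsd, -⟩ := step_iff.mp hs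
  exact atom_not_isValT hA (isValT_mem_domD h hsd)

theorem eval_val_eq {d e : Distr} (h : IsValD d) (he : Eval d e) : e = d := by
  rcases Relation.ReflTransGen.cases_head he with h' | ⟨c, hc, -⟩
  · exact h'.symm
  · exact absurd hc (val_no_step h)
/-! ### Section C2: the diamond property -/

set_option maxHeartbeats 2000000 in
theorem step_diamond {d d₁ d₂ : Distr} (h1 : Step d d₁) (h2 : Step d d₂) :
    ∃ e, (Step d₁ e ∨ Cong d₁ e) ∧ (Step d₂ e ∨ Cong d₂ e) := by
  obtain ⟨s, ρ₁, a, X₁, hA₁, hs₁, hX₁sub, hX₁full, hsupp₁, hdom₁, hco₁⟩ := step_iff.mp h1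
  obtain ⟨u, ρ₂, b, X₂, hA₂, hs₂, hX₂sub, hX₂full, hsupp₂, hdom₂, hco₂⟩ := step_iff.mp h2
  by_cases hsu : s = u
  · -- same redex
    subst hsu
    have hρ : ρ₁ = ρ₂ := atom_det hA₁ hA₂
    subst hρ
    have hXiff : ∀ t, t ≠ s → (t ∈ X₁ ↔ t ∈ X₂) := fun t hts =>
      ⟨fun h => hX₂full t (hX₁sub h) hts, fun h => hX₁full t (hX₂sub h) hts⟩
    by_cases h1s : s ∈ domD d₁ <;> by_cases h2s : s ∈ domD d₂
    · -- s survives in both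
      refine ⟨ofFun (domD ρ₁ ∪ domD d₁)
        (fun t => coeff d t - (if t = s then a + b else 0) + (a+b) * coeff ρ₁ t),
        Or.inl ?_, Or.inl ?_⟩
      · apply step_intro s ρ₁ b (domD d₁) hA₁ h1s le_rfl (fun t ht _ => ht) (fun _ => h1s)
        · exact domD_ofFun _ _
        · intro t
          simp only [coeff_ofFun]
          by_cases htE : t ∈ domD ρ₁ ∪ domD d₁
          · rw [if_pos htE, hco₁ t]
            by_cases hts : t = s <;> simp [hts] <;> ring
          · rw [if_neg htE]
            simp only [Finset.mem_union, not_or] at htE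
            have hts : t ≠ s := fun h => htE.2 (h ▸ h1s)
            rw [coeff_eq_zero_of_not_mem htE.2, coeff_eq_zero_of_not_mem htE.1, if_neg hts]
            ring
      · have hEE : domD ρ₁ ∪ domD d₁ = domD ρ₁ ∪ domD d₂ := by
          ext t
          by_cases hts : t = s
          · subst hts
            rw [hdom₁] at h1s; rw [hdom₂] at h2s
            simp only [Finset.mem_union] at h1s h2s
            simp only [hdom₁, hdom₂, Finset.mem_union]
            tauto
          · have hX := hXiff t hts
            simp only [Finset.mem_union, hdom₁, hdom₂]
            tauto
        apply step_intro s ρ₁ a (domD d₂) hA₂ h2s le_rfl (fun t ht _ => ht) (fun _ => h2s)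
        · rw [domD_ofFun, hEE]
        · intro t
          simp only [coeff_ofFun]
          by_cases htE : t ∈ domD ρ₁ ∪ domD d₁
          · rw [if_pos htE, hco₂ t]
            by_cases hts : t = s <;> simp [hts] <;> ring
          · rw [if_neg htE]
            rw [hEE] at htE
            simp only [Finset.mem_union, not_or] at htE
            have hts : t ≠ s := fun h => htE.2 (h ▸ h2s)
            rw [coeff_eq_zero_of_not_mem htE.2, coeff_eq_zero_of_not_mem htE.1, if_neg hts]
            ring
    · -- s ∈ d₁, s ∉ d₂  : close d₁ → d₂ with amount b - a
      have hsρ : s ∉ domD ρ₁ := fun h => h2s (hdom₂ ▸ Finset.mem_union_left _ h)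
      have hρs : coeff ρ₁ s = 0 := coeff_eq_zero_of_not_mem hsρ
      have hcds : coeff d s = b := by
        have h0 : coeff d₂ s = 0 := coeff_eq_zero_of_not_mem h2s
        have := hco₂ s
        rw [h0, if_pos rfl, hρs] at this
        linear_combination -this
      have hkey : coeff d₁ s - (b - a) = 0 := by
        rw [hco₁ s, if_pos rfl, hρs, hcds]; ring
      refine ⟨d₂, Or.inl ?_, Or.inr (Cong.refl _)⟩
      apply step_intro s ρ₁ (b - a) (domD d₁ \ {s}) hA₁ h1s Finset.sdiff_subset
        (fun t ht hts => Finset.mem_sdiff.mpr ⟨ht, by simpa using hts⟩)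
        (fun hne => absurd hkey hne)
      · ext t
        by_cases hts : t = s
        · subst hts
          simp only [Finset.mem_union, Finset.mem_sdiff, Finset.mem_singleton]
          constructor
          · intro h; exact absurd h h2s
          · rintro (h | ⟨-, h⟩)
            · exact absurd h hsρ
            · exact absurd trivial h
        · have hX := hXiff t hts
          simp only [hdom₂, hdom₁, Finset.mem_union, Finset.mem_sdiff, Finset.mem_singleton]
          constructor
          · rintro (h | h)
            · exact Or.inr ⟨Or.inl h, hts⟩
            · exact Or.inr ⟨Or.inr (hX.mpr h), hts⟩
          · rintro (h | ⟨(h | h), -⟩)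
            · exact Or.inl h
            · exact Or.inl h
            · exact Or.inr (hX.mp h)
      · intro t
        rw [hco₁ t, hco₂ t]
        by_cases hts : t = s <;> simp [hts] <;> ring
    · -- s ∉ d₁, s ∈ d₂ : close d₂ → d₁ with amount a - b
      have hsρ : s ∉ domD ρ₁ := fun h => h1s (hdom₁ ▸ Finset.mem_union_left _ h)
      have hρs : coeff ρ₁ s = 0 := coeff_eq_zero_of_not_mem hsρ
      have hcds : coeff d s = a := by
        have h0 : coeff d₁ s = 0 := coeff_eq_zero_of_not_mem h1s
        have := hco₁ s
        rw [h0, if_pos rfl, hρs] at this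
        linear_combination -this
      have hkey : coeff d₂ s - (a - b) = 0 := by
        rw [hco₂ s, if_pos rfl, hρs, hcds]; ring
      refine ⟨d₁, Or.inr (Cong.refl _), Or.inl ?_⟩
      apply step_intro s ρ₁ (a - b) (domD d₂ \ {s}) hA₂ h2s Finset.sdiff_subset
        (fun t ht hts => Finset.mem_sdiff.mpr ⟨ht, by simpa using hts⟩)
        (fun hne => absurd hkey hne)
      · ext t
        by_cases hts : t = s
        · subst hts
          simp only [Finset.mem_union, Finset.mem_sdiff, Finset.mem_singleton]
          constructor
          · intro h; exact absurd h h1s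
          · rintro (h | ⟨-, h⟩)
            · exact absurd h hsρ
            · exact absurd trivial h
        · have hX := hXiff t hts
          simp only [hdom₂, hdom₁, Finset.mem_union, Finset.mem_sdiff, Finset.mem_singleton]
          constructor
          · rintro (h | h)
            · exact Or.inr ⟨Or.inl h, hts⟩
            · exact Or.inr ⟨Or.inr (hX.mp h), hts⟩
          · rintro (h | ⟨(h | h), -⟩)
            · exact Or.inl h
            · exact Or.inl h
            · exact Or.inr (hX.mpr h)
      · intro t
        rw [hco₁ t, hco₂ t]
        by_cases hts : t = s <;> simp [hts] <;> ring
    · -- s gone from both : d₁ ≡ d₂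
      have hsρ : s ∉ domD ρ₁ := fun h => h1s (hdom₁ ▸ Finset.mem_union_left _ h)
      have hρs : coeff ρ₁ s = 0 := coeff_eq_zero_of_not_mem hsρ
      have hcda : coeff d s = a := by
        have h0 : coeff d₁ s = 0 := coeff_eq_zero_of_not_mem h1s
        have := hco₁ s
        rw [h0, if_pos rfl, hρs] at this
        linear_combination -this
      have hcdb : coeff d s = b := by
        have h0 : coeff d₂ s = 0 := coeff_eq_zero_of_not_mem h2s
        have := hco₂ s
        rw [h0, if_pos rfl, hρs] at this
        linear_combination -this
      have hab : a = b := by rw [← hcda, hcdb]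
      subst hab
      refine ⟨d₁, Or.inr (Cong.refl _), Or.inr (cong_of _ _ ?_ ?_)⟩
      · rw [hdom₁, hdom₂]
        ext t
        by_cases hts : t = s
        · subst hts
          have hX1 : t ∉ X₁ := fun h => h1s (hdom₁ ▸ Finset.mem_union_right _ h)
          have hX2 : t ∉ X₂ := fun h => h2s (hdom₂ ▸ Finset.mem_union_right _ h)
          simp [Finset.mem_union, hX1, hX2]
        · have hX := hXiff t hts
          simp only [Finset.mem_union]
          tauto
      · intro t
        rw [hco₁ t, hco₂ t]
  · -- distinct redexes
    have hus : u ≠ s := fun h => hsu h.symm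
    have hu1 : u ∈ domD d₁ := hdom₁ ▸ Finset.mem_union_right _ (hX₁full u hs₂ hus)
    have hs2 : s ∈ domD d₂ := hdom₂ ▸ Finset.mem_union_right _ (hX₂full s hs₁ hsu)
    have hXiff : ∀ t, t ≠ s → t ≠ u → (t ∈ X₁ ↔ t ∈ X₂) := fun t hts htu =>
      ⟨fun h => hX₂full t (hX₁sub h) htu, fun h => hX₁full t (hX₂sub h) hts⟩
    set Y₁ : Finset Term :=
      (domD d₁ \ {u}) ∪ ((domD ρ₁ ∪ domD ρ₂ ∪ domD d₂) ∩ {u}) with hY₁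
    set Y₂ : Finset Term :=
      (domD d₂ \ {s}) ∪ ((domD ρ₁ ∪ domD ρ₂ ∪ domD d₁) ∩ {s}) with hY₂
    have hY₁mem : ∀ t, t ∈ Y₁ ↔ ((t ∈ domD d₁ ∧ t ≠ u) ∨
        ((t ∈ domD ρ₁ ∨ t ∈ domD ρ₂ ∨ t ∈ domD d₂) ∧ t = u)) := by
      intro t
      simp only [hY₁, Finset.mem_union, Finset.mem_sdiff, Finset.mem_inter,
        Finset.mem_singleton]
      tauto
    have hY₂mem : ∀ t, t ∈ Y₂ ↔ ((t ∈ domD d₂ ∧ t ≠ s) ∨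
        ((t ∈ domD ρ₁ ∨ t ∈ domD ρ₂ ∨ t ∈ domD d₁) ∧ t = s)) := by
      intro t
      simp only [hY₂, Finset.mem_union, Finset.mem_sdiff, Finset.mem_inter,
        Finset.mem_singleton]
      tauto
    have hE2 : domD ρ₂ ∪ Y₁ = domD ρ₁ ∪ Y₂ := by
      ext t
      simp only [Finset.mem_union, hY₁mem t, hY₂mem t]
      by_cases hts : t = s
      · subst hts
        have hd1 : t ∈ domD ρ₁ → t ∈ domD d₁ := fun h => hdom₁ ▸ Finset.mem_union_left _ h
        have htt : t = t := rfl
        tauto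
      · by_cases htu : t = u
        · subst htu
          have hd2 : t ∈ domD ρ₂ → t ∈ domD d₂ := fun h => hdom₂ ▸ Finset.mem_union_left _ h
          have htt : t = t := rfl
          tauto
        · have hX := hXiff t hts htu
          have h1 : t ∈ domD d₁ ↔ t ∈ domD ρ₁ ∨ t ∈ X₁ := by
            rw [hdom₁]; exact Finset.mem_union
          have h2 : t ∈ domD d₂ ↔ t ∈ domD ρ₂ ∨ t ∈ X₂ := by
            rw [hdom₂]; exact Finset.mem_union
          constructor
          · rintro (h | ⟨h, -⟩ | ⟨-, habs⟩)
            · exact Or.inr (Or.inl ⟨h2.mpr (Or.inl h), hts⟩)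
            · rcases h1.mp h with hh | hh
              · exact Or.inl hh
              · exact Or.inr (Or.inl ⟨h2.mpr (Or.inr (hX.mp hh)), hts⟩)
            · exact absurd habs htu
          · rintro (h | ⟨h, -⟩ | ⟨-, habs⟩)
            · exact Or.inr (Or.inl ⟨h1.mpr (Or.inl h), htu⟩)
            · rcases h2.mp h with hh | hh
              · exact Or.inl hh
              · exact Or.inr (Or.inl ⟨h1.mpr (Or.inr (hX.mpr hh)), htu⟩)
            · exact absurd habs hts
    refine ⟨ofFun (domD ρ₂ ∪ Y₁)
      (fun t => coeff d t - (if t = s then a else 0) - (if t = u then b else 0)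
        + a * coeff ρ₁ t + b * coeff ρ₂ t), Or.inl ?_, Or.inl ?_⟩
    · -- step d₁ → e  contracting u
      apply step_intro u ρ₂ b Y₁ hA₂ hu1 ?sub ?full ?supp
      case sub =>
        apply Finset.union_subset Finset.sdiff_subset
        exact le_trans Finset.inter_subset_right (by simpa using hu1)
      case full =>
        intro t ht htu
        exact Finset.mem_union_left _ (Finset.mem_sdiff.mpr ⟨ht, by simpa using htu⟩)
      case supp =>
        intro hne
        by_contra hnotY
        have hmem : ¬(u ∈ domD ρ₁ ∨ u ∈ domD ρ₂ ∨ u ∈ domD d₂) := by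
          intro h
          exact hnotY ((hY₁mem u).mpr (Or.inr ⟨h, rfl⟩))
        push_neg at hmem
        obtain ⟨m1, m2, m3⟩ := hmem
        have hcdu : coeff d u = b := by
          have h0 : coeff d₂ u = 0 := coeff_eq_zero_of_not_mem m3
          have := hco₂ u
          rw [h0, if_pos rfl, coeff_eq_zero_of_not_mem m2] at this
          linear_combination -this
        apply hne
        rw [hco₁ u, if_neg hus, coeff_eq_zero_of_not_mem m1, hcdu]
        ring
      · exact domD_ofFun _ _
      · intro t
        simp only [coeff_ofFun]
        by_cases htE : t ∈ domD ρ₂ ∪ Y₁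
        · rw [if_pos htE, hco₁ t]
          by_cases hts : t = s <;> by_cases htu : t = u
          · exact absurd (hts.symm.trans htu) hsu
          · simp [hts, htu, hsu]; try ring
          · simp [hts, htu, hus]; try ring
          · simp [hts, htu]; try ring
        · rw [if_neg htE]
          simp only [Finset.mem_union, not_or] at htE
          obtain ⟨hρ2, hY⟩ := htE
          by_cases htu : t = u
          · subst htu
            have hmem : ¬(t ∈ domD ρ₁ ∨ t ∈ domD ρ₂ ∨ t ∈ domD d₂) := by
              intro h
              exact hY ((hY₁mem t).mpr (Or.inr ⟨h, rfl⟩))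
            push_neg at hmem
            obtain ⟨m1, m2, m3⟩ := hmem
            have hcdu : coeff d t = b := by
              have h0 : coeff d₂ t = 0 := coeff_eq_zero_of_not_mem m3
              have := hco₂ t
              rw [h0, if_pos rfl, coeff_eq_zero_of_not_mem m2] at this
              linear_combination -this
            rw [hco₁ t, if_neg hus, if_pos rfl, coeff_eq_zero_of_not_mem m1,
              coeff_eq_zero_of_not_mem hρ2, hcdu]
            ring
          · have ht1 : t ∉ domD d₁ := by
              intro h
              exact hY ((hY₁mem t).mpr (Or.inl ⟨h, htu⟩))
            rw [coeff_eq_zero_of_not_mem ht1, coeff_eq_zero_of_not_mem hρ2, if_neg htu]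
            ring
    · -- step d₂ → e  contracting s
      apply step_intro s ρ₁ a Y₂ hA₁ hs2 ?sub2 ?full2 ?supp2
      case sub2 =>
        apply Finset.union_subset Finset.sdiff_subset
        exact le_trans Finset.inter_subset_right (by simpa using hs2)
      case full2 =>
        intro t ht hts
        exact Finset.mem_union_left _ (Finset.mem_sdiff.mpr ⟨ht, by simpa using hts⟩)
      case supp2 =>
        intro hne
        by_contra hnotY
        have hmem : ¬(s ∈ domD ρ₁ ∨ s ∈ domD ρ₂ ∨ s ∈ domD d₁) := by
          intro h
          exact hnotY ((hY₂mem s).mpr (Or.inr ⟨h, rfl⟩))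
        push_neg at hmem
        obtain ⟨m1, m2, m3⟩ := hmem
        have hcds : coeff d s = a := by
          have h0 : coeff d₁ s = 0 := coeff_eq_zero_of_not_mem m3
          have := hco₁ s
          rw [h0, if_pos rfl, coeff_eq_zero_of_not_mem m1] at this
          linear_combination -this
        apply hne
        rw [hco₂ s, if_neg hsu, coeff_eq_zero_of_not_mem m2, hcds]
        ring
      · rw [domD_ofFun, hE2]
      · intro t
        simp only [coeff_ofFun]
        by_cases htE : t ∈ domD ρ₂ ∪ Y₁
        · rw [if_pos htE, hco₂ t]
          by_cases hts : t = s <;> by_cases htu : t = u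
          · exact absurd (hts.symm.trans htu) hsu
          · simp [hts, htu, hsu]; try ring
          · simp [hts, htu, hus]; try ring
          · simp [hts, htu]; try ring
        · rw [if_neg htE]
          rw [hE2] at htE
          simp only [Finset.mem_union, not_or] at htE
          obtain ⟨hρ1, hY⟩ := htE
          by_cases hts : t = s
          · subst hts
            have hmem : ¬(t ∈ domD ρ₁ ∨ t ∈ domD ρ₂ ∨ t ∈ domD d₁) := by
              intro h
              exact hY ((hY₂mem t).mpr (Or.inr ⟨h, rfl⟩))
            push_neg at hmem
            obtain ⟨m1, m2, m3⟩ := hmem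
            have hcds : coeff d t = a := by
              have h0 : coeff d₁ t = 0 := coeff_eq_zero_of_not_mem m3
              have := hco₁ t
              rw [h0, if_pos rfl, coeff_eq_zero_of_not_mem m1] at this
              linear_combination -this
            rw [hco₂ t, if_neg hsu, if_pos rfl, coeff_eq_zero_of_not_mem m2,
              coeff_eq_zero_of_not_mem hρ1, hcds]
            ring
          · have ht2 : t ∉ domD d₂ := by
              intro h
              exact hY ((hY₂mem t).mpr (Or.inl ⟨h, hts⟩))
            rw [coeff_eq_zero_of_not_mem ht2, coeff_eq_zero_of_not_mem hρ1, if_neg hts]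
            ring
/-! ### Section C3: confluence -/

/-- One step or a congruence. -/
def RS (d e : Distr) : Prop := Step d e ∨ Cong d e

theorem rs_diamond : ∀ a b c : Distr, RS a b → RS a c → ∃ e, RS b e ∧ RS c e := by
  rintro a b c (hab | hab) (hac | hac)
  · obtain ⟨e, h1, h2⟩ := step_diamond hab hac
    exact ⟨e, h1.imp id id, h2.imp id id⟩
  · exact ⟨b, Or.inr (Cong.refl _), Or.inl (Step.of_cong_left hac.symm hab)⟩
  · exact ⟨c, Or.inl (Step.of_cong_left hab.symm hac), Or.inr (Cong.refl _)⟩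
  · exact ⟨c, Or.inr (hab.symm.trans hac), Or.inr (Cong.refl _)⟩

theorem rtgRS_eval {d e : Distr} (h : Relation.ReflTransGen RS d e) :
    ∃ e', Eval d e' ∧ Cong e' e := by
  induction h with
  | refl => exact ⟨d, Relation.ReflTransGen.refl, Cong.refl _⟩
  | tail hbc hcd ih =>
      obtain ⟨e', hev, hc⟩ := ih
      rcases hcd with hstep | hcong
      · exact ⟨_, hev.tail (Step.of_cong_left hc hstep), Cong.refl _⟩
      · exact ⟨e', hev, hc.trans hcong⟩

theorem eval_confluent {d e₁ e₂ : Distr} (h1 : Eval d e₁) (h2 : Eval d e₂) :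
    ∃ f₁ f₂, Eval e₁ f₁ ∧ Eval e₂ f₂ ∧ Cong f₁ f₂ := by
  have hmono : ∀ x y : Distr, Step x y → RS x y := fun _ _ h => Or.inl h
  have j := Relation.church_rosser
    (fun a b c hab hac => by
      obtain ⟨e, hb, hc⟩ := rs_diamond a b c hab hac
      exact ⟨e, Relation.ReflGen.single hb, Relation.ReflTransGen.single hc⟩)
    (Relation.ReflTransGen.mono hmono _ _ h1) (Relation.ReflTransGen.mono hmono _ _ h2)
  obtain ⟨g, hg1, hg2⟩ := j
  obtain ⟨f₁, hf₁, hc₁⟩ := rtgRS_eval hg1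
  obtain ⟨f₂, hf₂, hc₂⟩ := rtgRS_eval hg2
  exact ⟨f₁, f₂, hf₁, hf₂, hc₁.trans hc₂.symm⟩

/-- If `t` evaluates to a value distribution `w`, then any reduct of `t` still
evaluates to `w` (up to congruence). -/
theorem eval_to_val {t w e : Distr} (hw : Eval t w) (hwv : IsValD w) (he : Eval t e) :
    ∃ w', Eval e w' ∧ Cong w' w := by
  obtain ⟨f₁, f₂, hf₁, hf₂, hc⟩ := eval_confluent hw he
  have : f₁ = w := eval_val_eq hwv hf₁
  subst this
  exact ⟨f₂, hf₂, hc.symm⟩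
/-! ### Section D: linearity of evaluation, beta steps -/

theorem step_add_left {d₁ e₁ : Distr} (h : Step d₁ e₁) (d₂ : Distr) :
    Step (d₁.add d₂) (e₁.add d₂) := by
  obtain ⟨a, s, ρ, r, h1, h2, hA⟩ := h
  exact ⟨a, s, ρ, r.add d₂,
    (Cong.addCongr h1 (Cong.refl _)).trans (Cong.addAssoc _ _ _),
    (Cong.addCongr h2 (Cong.refl _)).trans (Cong.addAssoc _ _ _), hA⟩

theorem step_add_right (d₁ : Distr) {d₂ e₂ : Distr} (h : Step d₂ e₂) :
    Step (d₁.add d₂) (d₁.add e₂) :=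
  ((Step.of_cong_left (Cong.addComm d₁ d₂) (step_add_left h d₁)).cong_right
    (Cong.addComm _ _))

theorem step_smul (a : ℂ) {d e : Distr} (h : Step d e) :
    Step (Distr.smul a d) (Distr.smul a e) := by
  obtain ⟨a', s, ρ, r, h1, h2, hA⟩ := h
  refine ⟨a * a', s, ρ, Distr.smul a r, ?_, ?_, hA⟩
  · exact ((Cong.smulCongr a h1).trans (Cong.smulAdd _ _ _)).trans
      (Cong.addCongr (Cong.smulSmul _ _ _) (Cong.refl _))
  · exact ((Cong.smulCongr a h2).trans (Cong.smulAdd _ _ _)).trans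
      (Cong.addCongr (Cong.smulSmul _ _ _) (Cong.refl _))

theorem eval_add_left {d₁ e₁ : Distr} (h : Eval d₁ e₁) (d₂ : Distr) :
    Eval (d₁.add d₂) (e₁.add d₂) := by
  induction h with
  | refl => exact Relation.ReflTransGen.refl
  | tail _ hstep ih => exact ih.tail (step_add_left hstep d₂)

theorem eval_add_right (d₁ : Distr) {d₂ e₂ : Distr} (h : Eval d₂ e₂) :
    Eval (d₁.add d₂) (d₁.add e₂) := by
  induction h with
  | refl => exact Relation.ReflTransGen.refl
  | tail _ hstep ih => exact ih.tail (step_add_right d₁ hstep)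

theorem eval_add {d₁ e₁ d₂ e₂ : Distr} (h₁ : Eval d₁ e₁) (h₂ : Eval d₂ e₂) :
    Eval (d₁.add d₂) (e₁.add e₂) :=
  (eval_add_left h₁ d₂).trans (eval_add_right e₁ h₂)

theorem eval_smul (a : ℂ) {d e : Distr} (h : Eval d e) :
    Eval (Distr.smul a d) (Distr.smul a e) := by
  induction h with
  | refl => exact Relation.ReflTransGen.refl
  | tail _ hstep ih => exact ih.tail (step_smul a hstep)

theorem eval_congL {d d' e : Distr} (hc : Cong d d') (h : Eval d e) :
    ∃ e', Eval d' e' ∧ Cong e e' := by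
  rcases Relation.ReflTransGen.cases_head h with rfl | ⟨c, hstep, hrest⟩
  · exact ⟨d', Relation.ReflTransGen.refl, hc⟩
  · exact ⟨e, Relation.ReflTransGen.head (Step.of_cong_left hc.symm hstep) hrest,
      Cong.refl _⟩

theorem step_beta (x : ℕ) (b : Distr) (v : Val) :
    Step (Distr.single (.app (.val (.lam x b)) (.val v))) (substD x v b) :=
  ⟨1, _, substD x v b, .zero,
    ((Cong.addZero _).trans (Cong.oneSmul _)).symm,
    ((Cong.addZero _).trans (Cong.oneSmul _)).symm, Atom.beta x b v⟩

theorem eval_appTD_lam (x : ℕ) (b : Distr) {v : Distr} (hv : IsValD v) :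
    Eval (appTD (.val (.lam x b)) v) (bsubst x b v) := by
  induction v using Distr.ind with
  | hz => exact Relation.ReflTransGen.refl
  | hs t =>
      cases t with
      | val w => exact Relation.ReflTransGen.single (step_beta x b w)
      | app s t => exact absurd hv (by simp [IsValT, IsValD])
      | seq t s => exact absurd hv (by simp [IsValT, IsValD])
      | letp y z t s => exact absurd hv (by simp [IsValT, IsValD])
      | matc t y s₁ z s₂ => exact absurd hv (by simp [IsValT, IsValD])
  | ha d₁ d₂ ih₁ ih₂ => exact eval_add (ih₁ hv.1) (ih₂ hv.2)
  | hm a d ih => exact eval_smul a (ih hv)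

theorem Cong.add_add_add (A B C D : Distr) :
    Cong ((A.add B).add (C.add D)) ((A.add C).add (B.add D)) :=
  ((Cong.addAssoc A B (C.add D)).trans
    (Cong.addCongr (Cong.refl A) (Cong.add_left_comm B C D))).trans
    (Cong.addAssoc A C (B.add D)).symm

theorem bsubst_zero_cong (x : ℕ) (v : Distr) : Cong (bsubst x .zero v) .zero := by
  induction v using Distr.ind with
  | hz => exact Cong.refl _
  | hs t =>
      cases t with
      | val w => exact Cong.refl _
      | app s t => exact Cong.refl _
      | seq t s => exact Cong.refl _
      | letp y z t s => exact Cong.refl _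
      | matc t y s₁ z s₂ => exact Cong.refl _
  | ha d₁ d₂ ih₁ ih₂ => exact (Cong.addCongr ih₁ ih₂).trans (Cong.addZero _)
  | hm a d ih => exact (Cong.smulCongr a ih).trans (Cong.smul_zero a)

theorem bsubst_add_cong (x : ℕ) (B₁ B₂ v : Distr) :
    Cong (bsubst x (B₁.add B₂) v) ((bsubst x B₁ v).add (bsubst x B₂ v)) := by
  induction v using Distr.ind with
  | hz => exact (Cong.addZero _).symm
  | hs t =>
      cases t with
      | val w => exact Cong.refl _
      | app s t => exact (Cong.addZero _).symm
      | seq t s => exact (Cong.addZero _).symm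
      | letp y z t s => exact (Cong.addZero _).symm
      | matc t y s₁ z s₂ => exact (Cong.addZero _).symm
  | ha d₁ d₂ ih₁ ih₂ =>
      exact (Cong.addCongr ih₁ ih₂).trans (Cong.add_add_add _ _ _ _)
  | hm a d ih => exact (Cong.smulCongr a ih).trans (Cong.smulAdd _ _ _)

theorem bsubst_smul_cong (x : ℕ) (a : ℂ) (B v : Distr) :
    Cong (bsubst x (Distr.smul a B) v) (Distr.smul a (bsubst x B v)) := by
  induction v using Distr.ind with
  | hz => exact (Cong.smul_zero a).symm
  | hs t =>
      cases t with
      | val w => exact Cong.refl _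
      | app s t => exact (Cong.smul_zero a).symm
      | seq t s => exact (Cong.smul_zero a).symm
      | letp y z t s => exact (Cong.smul_zero a).symm
      | matc t y s₁ z s₂ => exact (Cong.smul_zero a).symm
  | ha d₁ d₂ ih₁ ih₂ =>
      exact (Cong.addCongr ih₁ ih₂).trans (Cong.smulAdd _ _ _).symm
  | hm c d ih =>
      exact (((Cong.smulCongr c ih).trans (Cong.smulSmul c a _)).trans
        (cong_of_eq (by rw [mul_comm]))).trans (Cong.smulSmul a c _).symm

theorem eval_appD {d : Distr} (x : ℕ)
    (hlam : ∀ t ∈ domD d, ∃ b, t = Term.val (.lam x b))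
    {v : Distr} (hv : IsValD v) :
    ∃ e, Eval (appD d v) e ∧ Cong e (bsubst x (stripLam x d) v) := by
  induction d using Distr.ind with
  | hz => exact ⟨.zero, Relation.ReflTransGen.refl, (bsubst_zero_cong x v).symm⟩
  | hs t =>
      obtain ⟨b, rfl⟩ := hlam t (by simp [domD])
      have hstrip : stripLam x (.single (.val (.lam x b))) = b := by simp [stripLam]
      refine ⟨bsubst x b v, eval_appTD_lam x b hv, ?_⟩
      rw [hstrip]
      exact Cong.refl _
  | ha d₁ d₂ ih₁ ih₂ =>
      obtain ⟨e₁, hE₁, hc₁⟩ := ih₁ (fun t ht => hlam t (by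
        simp only [domD, Finset.mem_union]; exact Or.inl ht))
      obtain ⟨e₂, hE₂, hc₂⟩ := ih₂ (fun t ht => hlam t (by
        simp only [domD, Finset.mem_union]; exact Or.inr ht))
      exact ⟨e₁.add e₂, eval_add hE₁ hE₂,
        (Cong.addCongr hc₁ hc₂).trans (bsubst_add_cong x _ _ v).symm⟩
  | hm a d ih =>
      obtain ⟨e, hE, hc⟩ := ih hlam
      exact ⟨Distr.smul a e, eval_smul a hE,
        (Cong.smulCongr a hc).trans (bsubst_smul_cong x a _ v).symm⟩
/-! ### Section E1: Booleans, spans, inner products -/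

def ttT : Term := .val (.inl .star)
def ffT : Term := .val (.inr .star)

theorem ttD_eq : ttD = Distr.single ttT := rfl
theorem ffD_eq : ffD = Distr.single ffT := rfl

theorem ttT_ne_ffT : ttT ≠ ffT := by simp [ttT, ffT]

theorem mem_BoolT_iff {d : Distr} : d ∈ BoolT ↔ d = ttD ∨ d = ffD := by
  constructor
  · rintro (⟨v, hv, rfl⟩ | ⟨v, hv, rfl⟩)
    · rw [Set.mem_singleton_iff.mp hv]; exact Or.inl rfl
    · rw [Set.mem_singleton_iff.mp hv]; exact Or.inr rfl
  · rintro (rfl | rfl)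
    · exact Or.inl ⟨.single (.val .star), rfl, rfl⟩
    · exact Or.inr ⟨.single (.val .star), rfl, rfl⟩

theorem span_bool_struct {v : Distr} (h : Span BoolT v) :
    IsValD v ∧ fvD v = ∅ ∧ ∀ t ∈ domD v, t = ttT ∨ t = ffT := by
  induction h with
  | mem hd =>
      rcases mem_BoolT_iff.mp hd with rfl | rfl
      · refine ⟨trivial, rfl, ?_⟩
        intro t ht
        simp only [ttD_eq, domD, Finset.mem_singleton] at ht
        exact Or.inl ht
      · refine ⟨trivial, rfl, ?_⟩
        intro t ht
        simp only [ffD_eq, domD, Finset.mem_singleton] at ht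
        exact Or.inr ht
  | zero => exact ⟨trivial, rfl, by simp [domD]⟩
  | add h₁ h₂ ih₁ ih₂ =>
      refine ⟨⟨ih₁.1, ih₂.1⟩, ?_, ?_⟩
      · simp [fvD, ih₁.2.1, ih₂.2.1]
      · intro t ht
        simp only [domD, Finset.mem_union] at ht
        rcases ht with ht | ht
        · exact ih₁.2.2 t ht
        · exact ih₂.2.2 t ht
  | smul a h ih => exact ⟨ih.1, by simp [fvD, ih.2.1], ih.2.2⟩
  | congr h hc ih =>
      exact ⟨hc.isValD_iff.mp ih.1, hc.fvD_eq ▸ ih.2.1, hc.domD_eq ▸ ih.2.2⟩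

theorem piB_cong {a b : Distr} (h : Cong a b) : piB a = piB b := by
  simp [piB, h.coeff_eq _]

theorem piB_zero : piB .zero = (0, 0) := rfl

theorem piB_add (d₁ d₂ : Distr) :
    piB (d₁.add d₂) = ((piB d₁).1 + (piB d₂).1, (piB d₁).2 + (piB d₂).2) := by
  simp [piB, coeff]

theorem piB_smul (a : ℂ) (d : Distr) :
    piB (Distr.smul a d) = (a * (piB d).1, a * (piB d).2) := by
  simp [piB, coeff]

theorem piB_ttD : piB ttD = (1, 0) := by
  simp [piB, ttD, coeff, ttT, ffT]

theorem piB_ffD : piB ffD = (0, 1) := by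
  simp [piB, ffD, coeff, ttT, ffT]

theorem innerD_bool {w : Distr} (hdom : ∀ t ∈ domD w, t = ttT ∨ t = ffT) :
    innerD w w = hinner (piB w) (piB w) := by
  have hsub : domD w ⊆ ({ttT, ffT} : Finset Term) := by
    intro t ht
    rcases hdom t ht with rfl | rfl <;> simp
  unfold innerD
  rw [Finset.sum_subset hsub (fun t _ htn => by
    rw [coeff_eq_zero_of_not_mem htn]; ring)]
  rw [Finset.sum_pair ttT_ne_ffT]
  rfl

theorem hinner_self_ofReal (p : ℂ × ℂ) :
    hinner p p = ((Complex.normSq p.1 + Complex.normSq p.2 : ℝ) : ℂ) := by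
  unfold hinner
  rw [← Complex.normSq_eq_conj_mul_self, ← Complex.normSq_eq_conj_mul_self]
  push_cast
  ring

theorem normD_eq_one_iff {w : Distr} (hdom : ∀ t ∈ domD w, t = ttT ∨ t = ffT) :
    normD w = 1 ↔ hinner (piB w) (piB w) = 1 := by
  rw [normD, innerD_bool hdom, hinner_self_ofReal, Complex.ofReal_re]
  rw [Real.sqrt_eq_one]
  exact ⟨fun h => by rw [h]; norm_num, fun h => by exact_mod_cast h⟩

theorem ttD_mem_sharpBool : ttD ∈ sharpBool := by
  refine ⟨Span.mem (mem_BoolT_iff.mpr (Or.inl rfl)), ⟨⟨trivial, rfl⟩, ?_⟩⟩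
  rw [normD_eq_one_iff (by
    intro t ht
    simp only [ttD_eq, domD, Finset.mem_singleton] at ht
    exact Or.inl ht), piB_ttD]
  simp [hinner]

theorem ffD_mem_sharpBool : ffD ∈ sharpBool := by
  refine ⟨Span.mem (mem_BoolT_iff.mpr (Or.inr rfl)), ⟨⟨trivial, rfl⟩, ?_⟩⟩
  rw [normD_eq_one_iff (by
    intro t ht
    simp only [ffD_eq, domD, Finset.mem_singleton] at ht
    exact Or.inr ht), piB_ffD]
  simp [hinner]

theorem piB_combo (α β : ℂ) :
    piB (Distr.add (.smul α ttD) (.smul β ffD)) = (α, β) := by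
  simp [piB, coeff, ttD, ffD, ttT, ffT]

theorem combo_dom (α β : ℂ) :
    ∀ t ∈ domD (Distr.add (.smul α ttD) (.smul β ffD)), t = ttT ∨ t = ffT := by
  intro t ht
  simp only [domD, ttD_eq, ffD_eq, Finset.mem_union, Finset.mem_singleton] at ht
  exact ht

theorem combo_mem_sharpBool (α β : ℂ)
    (h : Complex.normSq α + Complex.normSq β = 1) :
    (Distr.add (.smul α ttD) (.smul β ffD)) ∈ sharpBool := by
  refine ⟨Span.add (Span.smul α (Span.mem (mem_BoolT_iff.mpr (Or.inl rfl))))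
    (Span.smul β (Span.mem (mem_BoolT_iff.mpr (Or.inr rfl)))), ⟨⟨?_, ?_⟩, ?_⟩⟩
  · exact ⟨trivial, trivial⟩
  · rfl
  · rw [normD_eq_one_iff (combo_dom α β), piB_combo, hinner_self_ofReal]
    simp only [h]
    norm_num

theorem domD_nonempty_of_sphere {d : Distr} (h : d ∈ Sphere) : domD d ≠ ∅ := by
  intro hem
  have h0 : innerD d d = 0 := by simp [innerD, hem]
  have := h.2
  rw [normD, h0] at this
  simp at this
/-! ### Section E2: linear evaluation of the body against Boolean spans -/

theorem bsubst_tt (x : ℕ) (B : Distr) : bsubst x B ttD = substD x (.inl .star) B := rfl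
theorem bsubst_ff (x : ℕ) (B : Distr) : bsubst x B ffD = substD x (.inr .star) B := rfl

theorem key_eval (x : ℕ) (B : Distr) {w₁ w₂ : Distr}
    (h₁ : Eval (substD x (.inl .star) B) w₁) (hs₁ : Span BoolT w₁)
    (h₂ : Eval (substD x (.inr .star) B) w₂) (hs₂ : Span BoolT w₂)
    {v : Distr} (hv : IsValD v) (hdv : ∀ t ∈ domD v, t = ttT ∨ t = ffT) :
    ∃ w, Eval (bsubst x B v) w ∧ Span BoolT w ∧
      piB w = ((piB v).1 * (piB w₁).1 + (piB v).2 * (piB w₂).1,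
               (piB v).1 * (piB w₁).2 + (piB v).2 * (piB w₂).2) := by
  induction v using Distr.ind with
  | hz =>
      refine ⟨.zero, Relation.ReflTransGen.refl, Span.zero, ?_⟩
      rw [piB_zero]
      norm_num
  | hs t =>
      rcases hdv t (by simp [domD]) with rfl | rfl
      · refine ⟨w₁, h₁, hs₁, ?_⟩
        have : piB (Distr.single ttT) = (1, 0) := piB_ttD
        rw [show Distr.single ttT = ttD from rfl, piB_ttD]
        norm_num
      · refine ⟨w₂, h₂, hs₂, ?_⟩
        rw [show Distr.single ffT = ffD from rfl, piB_ffD]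
        norm_num
  | ha v₁ v₂ ih₁ ih₂ =>
      obtain ⟨u₁, hE₁, hS₁, hp₁⟩ := ih₁ hv.1 (fun t ht => hdv t (by
        simp only [domD, Finset.mem_union]; exact Or.inl ht))
      obtain ⟨u₂, hE₂, hS₂, hp₂⟩ := ih₂ hv.2 (fun t ht => hdv t (by
        simp only [domD, Finset.mem_union]; exact Or.inr ht))
      refine ⟨u₁.add u₂, eval_add hE₁ hE₂, Span.add hS₁ hS₂, ?_⟩
      rw [piB_add, piB_add, hp₁, hp₂]
      simp only [Prod.mk.injEq]
      constructor <;> ring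
  | hm a v ih =>
      obtain ⟨u, hE, hS, hp⟩ := ih hv hdv
      refine ⟨.smul a u, eval_smul a hE, Span.smul a hS, ?_⟩
      rw [piB_smul, piB_smul, hp]
      simp only [Prod.mk.injEq]
      constructor <;> ring
/-- A unitary distribution of closed abstractions is a value
of type ♯𝔹⇒♯𝔹 iff it represents a unitary operator on ℂ². -/
theorem charac_values_sharpBool_uarrow (d : Distr) (x : ℕ)
    (hS : d ∈ Sphere)
    (hlam : ∀ t ∈ domD d, ∃ b : Distr, t = Term.val (.lam x b)) :
    d ∈ uarrowT sharpBool sharpBool ↔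
      ∃ F : ℂ × ℂ → ℂ × ℂ, IsUnitaryOp F ∧ Represents d F := by
  constructor
  · rintro ⟨hS', x', hlam', hreal⟩
    obtain ⟨t₀, ht₀⟩ := Finset.nonempty_of_ne_empty (domD_nonempty_of_sphere hS)
    obtain ⟨b0, hb0⟩ := hlam t₀ ht₀
    obtain ⟨b0', hb0'⟩ := hlam' t₀ ht₀
    have hxx : x = x' := by
      rw [hb0] at hb0'
      simp only [Term.val.injEq, Val.lam.injEq] at hb0'
      exact hb0'.1
    subst hxx
    obtain ⟨w₁, hw₁mem, hw₁E⟩ := hreal ttD ttD_mem_sharpBool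
    obtain ⟨w₂, hw₂mem, hw₂E⟩ := hreal ffD ffD_mem_sharpBool
    obtain ⟨hw₁Span, hw₁Sph⟩ := hw₁mem
    obtain ⟨hw₂Span, hw₂Sph⟩ := hw₂mem
    rw [bsubst_tt] at hw₁E
    rw [bsubst_ff] at hw₂E
    set c₁ := piB w₁ with hc₁
    set c₂ := piB w₂ with hc₂
    set F : ℂ × ℂ → ℂ × ℂ :=
      fun p => (p.1 * c₁.1 + p.2 * c₂.1, p.1 * c₁.2 + p.2 * c₂.2) with hF
    have hdom₁ := (span_bool_struct hw₁Span).2.2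
    have hdom₂ := (span_bool_struct hw₂Span).2.2
    have h11 : hinner c₁ c₁ = 1 := (normD_eq_one_iff hdom₁).mp hw₁Sph.2
    have h22 : hinner c₂ c₂ = 1 := (normD_eq_one_iff hdom₂).mp hw₂Sph.2
    have hexp : ∀ u1 u2 v1 v2 : ℂ, hinner (F (u1, u2)) (F (v1, v2)) =
        (starRingEnd ℂ) u1 * v1 * hinner c₁ c₁ + (starRingEnd ℂ) u1 * v2 * hinner c₁ c₂ +
        (starRingEnd ℂ) u2 * v1 * hinner c₂ c₁ + (starRingEnd ℂ) u2 * v2 * hinner c₂ c₂ := by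
      intro u1 u2 v1 v2
      simp only [hF, hinner, map_add, map_mul]
      ring
    set alph : ℂ := (((Real.sqrt 2)⁻¹ : ℝ) : ℂ) with halphdef
    have hαα : alph * alph = (1/2 : ℂ) := by
      rw [halphdef, ← Complex.ofReal_mul, ← mul_inv, Real.mul_self_sqrt (by norm_num)]
      norm_num
    have hconj : (starRingEnd ℂ) alph = alph := Complex.conj_ofReal _
    have hnsq : Complex.normSq alph = 1/2 := by
      rw [halphdef, Complex.normSq_ofReal, ← mul_inv, Real.mul_self_sqrt (by norm_num)]
      norm_num
    have superpose : ∀ β : ℂ, Complex.normSq alph + Complex.normSq β = 1 →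
        hinner (F (alph, β)) (F (alph, β)) = 1 := by
      intro β hβ
      obtain ⟨wp, hwpmem, hwpE⟩ := hreal _ (combo_mem_sharpBool alph β hβ)
      obtain ⟨hwpSpan, hwpSph⟩ := hwpmem
      have hvb : IsValD (Distr.add (.smul alph ttD) (.smul β ffD)) := ⟨trivial, trivial⟩
      obtain ⟨w', hE', hS'', hp'⟩ := key_eval x (stripLam x d) hw₁E hw₁Span hw₂E hw₂Span
        hvb (combo_dom alph β)
      obtain ⟨w'', hEw'', hcw''⟩ := eval_to_val hwpE (span_bool_struct hwpSpan).1 hE'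
      rw [eval_val_eq (span_bool_struct hS'').1 hEw''] at hcw''
      have hpp : piB wp = piB w' := (piB_cong hcw'').symm
      have hFab : F (alph, β) = piB w' := by rw [hp', piB_combo, hF]
      have h1 : hinner (piB wp) (piB wp) = 1 :=
        (normD_eq_one_iff (span_bool_struct hwpSpan).2.2).mp hwpSph.2
      rw [hFab, ← hpp]
      exact h1
    have hβ1 : Complex.normSq alph + Complex.normSq alph = 1 := by rw [hnsq]; norm_num
    have hβ2 : Complex.normSq alph + Complex.normSq (alph * Complex.I) = 1 := by
      rw [Complex.normSq_mul, Complex.normSq_I, hnsq]; norm_num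
    have e3 := superpose alph hβ1
    have e4 := superpose (alph * Complex.I) hβ2
    have hconjI : (starRingEnd ℂ) (alph * Complex.I) = -(alph * Complex.I) := by
      rw [map_mul, hconj, Complex.conj_I]; ring
    rw [hexp, hconj, h11, h22] at e3
    rw [hexp, hconj, hconjI, h11, h22] at e4
    have hI2 : Complex.I * Complex.I = -1 := Complex.I_mul_I
    set h12 := hinner c₁ c₂ with hh12
    set h21 := hinner c₂ c₁ with hh21
    have hsum : h12 + h21 = 0 := by
      linear_combination 2*e3 - (2*(2 + h12 + h21)) * hαα
    have e4' : alph*alph*(2 + Complex.I*h12 - Complex.I*h21) = 1 := by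
      linear_combination e4 + (alph*alph)*hI2
    have hdiff : h12 = h21 := by
      linear_combination (-2*Complex.I)*e4' + (4*Complex.I - 2*(h12-h21))*hαα
        + (2*alph*alph*(h12-h21))*hI2
    have h12z : h12 = 0 := by linear_combination (1/2 : ℂ)*hsum + (1/2 : ℂ)*hdiff
    have h21z : h21 = 0 := by linear_combination (1/2 : ℂ)*hsum - (1/2 : ℂ)*hdiff
    refine ⟨F, ?_, ?_⟩
    · intro u v
      have h := hexp u.1 u.2 v.1 v.2
      rw [Prod.mk.eta, Prod.mk.eta] at h
      rw [h, h11, h22, h12z, h21z]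
      simp only [hinner]
      ring
    · intro v hvSpan
      obtain ⟨hvVal, -, hvDom⟩ := span_bool_struct hvSpan
      obtain ⟨e, hEe, hce⟩ := eval_appD x hlam hvVal
      obtain ⟨w, hEw, hSw, hpw⟩ := key_eval x (stripLam x d) hw₁E hw₁Span hw₂E hw₂Span
        hvVal hvDom
      obtain ⟨w', hEw', hcw⟩ := eval_congL hce.symm hEw
      refine ⟨w', Span.congr hSw hcw, hEe.trans hEw', ?_⟩
      rw [← piB_cong hcw, hpw, hF]
  · rintro ⟨F, hFU, hFR⟩
    refine ⟨hS, x, hlam, ?_⟩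
    intro v hv
    obtain ⟨hvSpan, hvSph⟩ := hv
    obtain ⟨hvVal, hvFv, hvDom⟩ := span_bool_struct hvSpan
    obtain ⟨w, hwSpan, hwE, hwP⟩ := hFR v hvSpan
    obtain ⟨hwVal, hwFv, hwDom⟩ := span_bool_struct hwSpan
    obtain ⟨e, hEe, hce⟩ := eval_appD x hlam hvVal
    obtain ⟨w₁, hEw₁, hcw₁⟩ := eval_to_val hwE hwVal hEe
    obtain ⟨g, hEg, hcg⟩ := eval_congL hce hEw₁
    have hcwg : Cong w g := hcw₁.symm.trans hcg
    have hnormw : normD w = 1 := by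
      rw [normD_eq_one_iff hwDom, hwP, hFU]
      exact (normD_eq_one_iff hvDom).mp hvSph.2
    refine ⟨g, ⟨Span.congr hwSpan hcwg, ⟨⟨?_, ?_⟩, ?_⟩⟩, hEg⟩
    · exact hcwg.isValD_iff.mp hwVal
    · exact hcwg.fvD_eq ▸ hwFv
    · rw [← hcwg.normD_eq]
      exact hnormw

end LinAlg
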